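/- Let Λ ∈ Sym(2n,ℝ) be written in 2×2 block form with n×n blocks Λ¹¹, Λ¹², Λ²¹ = (Λ¹²)ᵀ, Λ²², let M ∈ Sym(n,ℝ) be invertible, and suppose Λ²² + M is negative definite. Define Π(Λ) as the symmetric 2n×2n matrix with blocks Π¹¹ = Λ¹¹ − Λ¹²(M+Λ²²)⁻¹(Λ¹²)ᵀ, Π¹² = Λ¹²(M+Λ²²)⁻¹M, Π²¹ = (Π¹²)ᵀ, Π²² = M − M(M+Λ²²)⁻¹M. Then Π(Λ)²² − M is positive definite, and the map Π⁻¹ defined on symmetric Q with Q²² − M positive definite by (Π⁻¹)¹¹ = Q¹¹ + Q¹²(M−Q²²)⁻¹(Q¹²)ᵀ, (Π⁻¹)¹² = Q¹²(M−Q²²)⁻¹M, (Π⁻¹)²² = M(M−Q²²)⁻¹M − M satisfies Π⁻¹(Π(Λ)) = Λ. -/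

import Mathlib

open Matrix

lemma posdef_conj_aux {n : ℕ} {N B : Matrix (Fin n) (Fin n) ℝ}
    (hN : N.PosDef) (hB : IsUnit B) : (Bᴴ * N * B).PosDef := by
  refine PosDef.of_dotProduct_mulVec_pos (isHermitian_conjTranspose_mul_mul B hN.1) fun x hx => ?_
  have hx' : B *ᵥ x ≠ 0 :=
    (Matrix.mulVec_injective_iff_isUnit.mpr hB |>.ne_iff' (by simp)).2 hx
  have := hN.dotProduct_mulVec_pos hx'
  rwa [star_mulVec, ← dotProduct_mulVec, mulVec_mulVec, mulVec_mulVec] at this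

/-- The map `Π` on block matrices `Λ` with `Λ²² + M ≺ 0` produces `Q = Π(Λ)` with
`Q²² − M ≻ 0`, and the explicit inverse map `Π⁻¹` recovers `Λ` from `Π(Λ)`. -/
theorem Pi_map_and_inverse {n : ℕ}
    (M Λ11 Λ12 Λ22 : Matrix (Fin n) (Fin n) ℝ)
    (hM : Mᵀ = M) (hMinv : IsUnit M)
    (hΛ11 : Λ11ᵀ = Λ11) (hΛ22 : Λ22ᵀ = Λ22)
    (hneg : (-(M + Λ22)).PosDef) :
    ((M - M * (M + Λ22)⁻¹ * M) - M).PosDef ∧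
    (Λ11 - Λ12 * (M + Λ22)⁻¹ * Λ12ᵀ)
        + (Λ12 * (M + Λ22)⁻¹ * M) * (M - (M - M * (M + Λ22)⁻¹ * M))⁻¹ * (Λ12 * (M + Λ22)⁻¹ * M)ᵀ
      = Λ11 ∧
    (Λ12 * (M + Λ22)⁻¹ * M) * (M - (M - M * (M + Λ22)⁻¹ * M))⁻¹ * M = Λ12 ∧
    M * (M - (M - M * (M + Λ22)⁻¹ * M))⁻¹ * M - M = Λ22 := by
  set A := M + Λ22 with hAdef
  have hAt : Aᵀ = A := by rw [hAdef, transpose_add, hM, hΛ22]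
  have hAneg : IsUnit (-A) := hneg.isUnit
  have hAunit : IsUnit A := by simpa using hAneg.neg
  have hAdet : IsUnit A.det := (Matrix.isUnit_iff_isUnit_det A).mp hAunit
  have hMdet : IsUnit M.det := (Matrix.isUnit_iff_isUnit_det M).mp hMinv
  have hMM : M⁻¹ * M = 1 := Matrix.nonsing_inv_mul M hMdet
  have hMM' : M * M⁻¹ = 1 := Matrix.mul_nonsing_inv M hMdet
  have hAA : A⁻¹ * A = 1 := Matrix.nonsing_inv_mul A hAdet
  have hAA' : A * A⁻¹ = 1 := Matrix.mul_nonsing_inv A hAdet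
  have hK : M - (M - M * A⁻¹ * M) = M * A⁻¹ * M := sub_sub_cancel _ _
  have hKinv : (M * A⁻¹ * M)⁻¹ = M⁻¹ * A * M⁻¹ := by
    apply Matrix.inv_eq_right_inv
    calc M * A⁻¹ * M * (M⁻¹ * A * M⁻¹)
        = M * A⁻¹ * (M * M⁻¹) * A * M⁻¹ := by noncomm_ring
      _ = M * (A⁻¹ * A) * M⁻¹ := by rw [hMM']; noncomm_ring
      _ = 1 := by rw [hAA]; simp [hMM']
  have hinvneg : (-A)⁻¹ = -(A⁻¹) := by
    apply Matrix.inv_eq_right_inv; rw [neg_mul_neg, hAA']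
  refine ⟨?_, ?_, ?_, ?_⟩
  · have : (M - M * A⁻¹ * M) - M = Mᴴ * (-A)⁻¹ * M := by
      rw [hinvneg, conjTranspose_eq_transpose_of_trivial, hM]
      noncomm_ring
    rw [this]
    exact posdef_conj_aux hneg.inv hMinv
  · have ht : (Λ12 * A⁻¹ * M)ᵀ = M * A⁻¹ * Λ12ᵀ := by
      rw [transpose_mul, transpose_mul, hM, transpose_nonsing_inv, hAt, Matrix.mul_assoc]
    rw [hK, hKinv, ht]
    have : Λ12 * A⁻¹ * M * (M⁻¹ * A * M⁻¹) * (M * A⁻¹ * Λ12ᵀ)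
        = Λ12 * A⁻¹ * Λ12ᵀ := by
      calc Λ12 * A⁻¹ * M * (M⁻¹ * A * M⁻¹) * (M * A⁻¹ * Λ12ᵀ)
          = Λ12 * A⁻¹ * (M * M⁻¹) * A * (M⁻¹ * M) * A⁻¹ * Λ12ᵀ := by noncomm_ring
        _ = Λ12 * (A⁻¹ * A) * A⁻¹ * Λ12ᵀ := by rw [hMM', hMM]; noncomm_ring
        _ = Λ12 * A⁻¹ * Λ12ᵀ := by rw [hAA]; noncomm_ring
    rw [this]; abel
  · rw [hK, hKinv]
    calc Λ12 * A⁻¹ * M * (M⁻¹ * A * M⁻¹) * M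
        = Λ12 * A⁻¹ * (M * M⁻¹) * A * (M⁻¹ * M) := by noncomm_ring
      _ = Λ12 := by rw [hMM', hMM]; simp [Matrix.mul_assoc, hAA]
  · rw [hK, hKinv]
    calc M * (M⁻¹ * A * M⁻¹) * M - M
        = (M * M⁻¹) * A * (M⁻¹ * M) - M := by noncomm_ring
      _ = Λ22 := by rw [hMM', hMM]; simp [hAdef]
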